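/- Let u be a nonprincipal ultrafilter on ℕ. Then the tensor product u ⊗ u is a Ramsey witness: for every A ∈ u ⊗ u there exists an infinite set H ⊆ ℕ such that (h₁, h₂) ∈ A for all h₁, h₂ ∈ H with h₁ < h₂. -/

import Mathlib

/-- The tensor product of ultrafilters: `A ∈ u ⊗ v ↔ {a | {b | (a,b) ∈ A} ∈ v} ∈ u`. -/
def Ultrafilter.tensor {α β : Type*} (u : Ultrafilter α) (v : Ultrafilter β) :
    Ultrafilter (α × β) :=
  u.bind fun a => v.map fun b => (a, b)

/-- An ultrafilter on `ℕ × ℕ` is a Ramsey witness if every member contains `[H]²`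
for some infinite `H ⊆ ℕ`. -/
def IsRamseyWitness (w : Ultrafilter (ℕ × ℕ)) : Prop :=
  ∀ A ∈ w, ∃ H : Set ℕ, H.Infinite ∧ ∀ h₁ ∈ H, ∀ h₂ ∈ H, h₁ < h₂ → (h₁, h₂) ∈ A

theorem stmt_0 (u : Ultrafilter ℕ) (hu : ∀ A : Set ℕ, A.Finite → A ∉ u) :
    IsRamseyWitness (u.tensor u) := by
  classical
  intro A hA
  have hinf : ∀ S : Set ℕ, S ∈ u → S.Infinite := by
    intro S hS
    by_contra h
    exact hu S (Set.not_infinite.mp h) hS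
  have hB : {a : ℕ | {b : ℕ | (a, b) ∈ A} ∈ u} ∈ u := by
    exact hA
  set B : Set ℕ := {a : ℕ | {b : ℕ | (a, b) ∈ A} ∈ u} with hBdef
  -- choice function: pick an element of S greater than x (0 as junk)
  let next : ℕ → Set ℕ → ℕ := fun x S => if h : ∃ y ∈ S, x < y then h.choose else 0
  have next_spec : ∀ x S, (∃ y ∈ S, x < y) → next x S ∈ S ∧ x < next x S := by
    intro x S h
    simp only [next, dif_pos h]
    exact ⟨h.choose_spec.1, h.choose_spec.2⟩
  -- recursive construction of (point, set) pairs
  let F : ℕ → ℕ × Set ℕ := fun n => Nat.rec (next 0 B, B)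
    (fun _ p => (next p.1 (p.2 ∩ {m | (p.1, m) ∈ A}), p.2 ∩ {m | (p.1, m) ∈ A})) n
  have inv : ∀ n, (F n).2 ∈ u ∧ (F n).2 ⊆ B ∧ (F n).1 ∈ (F n).2 := by
    intro n
    induction n with
    | zero =>
      refine ⟨hB, le_refl _, ?_⟩
      have h : ∃ y ∈ B, 0 < y := (hinf B hB).exists_gt 0
      exact (next_spec 0 B h).1
    | succ n ih =>
      obtain ⟨hSu, hSB, hxS⟩ := ih
      have hAx : {m | ((F n).1, m) ∈ A} ∈ u := hSB hxS
      have hS'u : (F n).2 ∩ {m | ((F n).1, m) ∈ A} ∈ u := u.inter_mem hSu hAx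
      have h : ∃ y ∈ (F n).2 ∩ {m | ((F n).1, m) ∈ A}, (F n).1 < y :=
        (hinf _ hS'u).exists_gt _
      exact ⟨hS'u, fun m hm => hSB hm.1, (next_spec _ _ h).1⟩
  have fmono : StrictMono (fun n => (F n).1) := by
    apply strictMono_nat_of_lt_succ
    intro n
    obtain ⟨hSu, hSB, hxS⟩ := inv n
    have hAx : {m | ((F n).1, m) ∈ A} ∈ u := hSB hxS
    have hS'u : (F n).2 ∩ {m | ((F n).1, m) ∈ A} ∈ u := u.inter_mem hSu hAx
    have h : ∃ y ∈ (F n).2 ∩ {m | ((F n).1, m) ∈ A}, (F n).1 < y :=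
      (hinf _ hS'u).exists_gt _
    exact (next_spec _ _ h).2
  have Smono : ∀ m n, m ≤ n → (F n).2 ⊆ (F m).2 := by
    intro m n hmn
    induction n with
    | zero => simp_all
    | succ n ih =>
      rcases Nat.lt_or_ge m (n+1) with h | h
      · exact fun x hx => ih (Nat.lt_succ_iff.mp h) hx.1
      · have : m = n + 1 := le_antisymm hmn h
        subst this; exact fun x hx => hx
  have key : ∀ m n, m < n → ((F m).1, (F n).1) ∈ A := by
    intro m n hmn
    have h1 : (F n).1 ∈ (F n).2 := (inv n).2.2
    have h2 : (F n).2 ⊆ (F (m+1)).2 := Smono (m+1) n hmn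
    have h3 : (F n).1 ∈ (F m).2 ∩ {k | ((F m).1, k) ∈ A} := h2 h1
    exact h3.2
  refine ⟨Set.range (fun n => (F n).1), Set.infinite_range_of_injective fmono.injective, ?_⟩
  rintro h₁ ⟨m, rfl⟩ h₂ ⟨n, rfl⟩ hlt
  exact key m n (fmono.lt_iff_lt.mp hlt)
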